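/- Every linear, time-invariant, complete behavior admits a kernel representation: if B ⊆ (ℝⁿ)^ℤ is an ℝ-linear subspace satisfying σB = B (where σ is the backward shift) and B is complete (i.e. w ∈ B whenever for all integers t₁ ≤ t₂ there exists v ∈ B with v(t) = w(t) for all t ∈ [t₁,t₂]), then there exist p ∈ ℕ and a Laurent polynomial matrix R(z) ∈ ℝ[z,z⁻¹]^{p×n} such that B = ker∞R. -/

import Mathlib

/-- The shift operator `R(σ)` associated with a Laurent polynomial matrix
`R ∈ ℝ[z,z⁻¹]^{p×n}`: `(R(σ)w)(t)ᵢ = Σⱼ Σ_k coeff_k(Rᵢⱼ) · w(t+k)ⱼ`. -/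
noncomputable def shiftOp {p n : ℕ} (R : Matrix (Fin p) (Fin n) (LaurentPolynomial ℝ))
    (w : ℤ → Fin n → ℝ) : ℤ → Fin p → ℝ :=
  fun t i => ∑ j, Finsupp.sum (R i j).coeff fun k c => c * w (t + k) j



open LaurentPolynomial

/-- The action of a single row `r ∈ ℝ[z,z⁻¹]^{1×n}` on a trajectory. -/
noncomputable def rowOp {n : ℕ} (r : Fin n → LaurentPolynomial ℝ)
    (w : ℤ → Fin n → ℝ) (t : ℤ) : ℝ :=
  ∑ j, Finsupp.sum (r j).coeff fun k c => c * w (t + k) j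

lemma rowOp_zero {n : ℕ} (w : ℤ → Fin n → ℝ) (t : ℤ) :
    rowOp (0 : Fin n → LaurentPolynomial ℝ) w t = 0 := by
  simp [rowOp]

lemma rowOp_add {n : ℕ} (r s : Fin n → LaurentPolynomial ℝ) (w : ℤ → Fin n → ℝ) (t : ℤ) :
    rowOp (r + s) w t = rowOp r w t + rowOp s w t := by
  unfold rowOp
  rw [← Finset.sum_add_distrib]
  refine Finset.sum_congr rfl fun j _ => ?_
  rw [Pi.add_apply, AddMonoidAlgebra.coeff_add]
  exact Finsupp.sum_add_index' (by simp) (fun k b₁ b₂ => add_mul _ _ _)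

lemma sum_single_mul (k : ℤ) (a : ℝ) (q : LaurentPolynomial ℝ) (g : ℤ → ℝ) :
    Finsupp.sum ((AddMonoidAlgebra.single k a : LaurentPolynomial ℝ) * q).coeff (fun m c => c * g m)
      = a * Finsupp.sum q.coeff (fun m c => c * g (k + m)) := by
  rw [AddMonoidAlgebra.mul_def]
  rw [AddMonoidAlgebra.coeff_single, Finsupp.sum_single_index (by simp)]
  have hc : (q.coeff.sum fun m₂ r₂ => (AddMonoidAlgebra.single (k + m₂) (a * r₂) : LaurentPolynomial ℝ)).coeff
      = q.coeff.sum fun m₂ r₂ => Finsupp.single (k + m₂) (a * r₂) := by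
    simp only [Finsupp.sum, AddMonoidAlgebra.coeff_sum, AddMonoidAlgebra.coeff_single]
  rw [hc]
  refine (Finsupp.sum_sum_index (h := fun m c => c * g m) (fun _ => zero_mul _) (fun _ _ _ => add_mul _ _ _)).trans ?_
  rw [Finsupp.mul_sum]
  refine Finsupp.sum_congr fun m _ => ?_
  refine (Finsupp.sum_single_index (h := fun m c => c * g m) (zero_mul _)).trans ?_
  ring

lemma rowOp_monomial_smul {n : ℕ} (k : ℤ) (a : ℝ) (r : Fin n → LaurentPolynomial ℝ)
    (w : ℤ → Fin n → ℝ) (t : ℤ) :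
    rowOp ((C a * T k) • r) w t = a * rowOp r w (t + k) := by
  unfold rowOp
  rw [Finset.mul_sum]
  refine Finset.sum_congr rfl fun j _ => ?_
  have hs : (AddMonoidAlgebra.single k a : LaurentPolynomial ℝ) = C a * T k :=
    single_eq_C_mul_T a k
  have h1 : ((C a * T k) • r) j = (AddMonoidAlgebra.single k a : LaurentPolynomial ℝ) * r j := by
    rw [hs]; rfl
  rw [h1, sum_single_mul k a (r j) (fun m => w (t + m) j)]
  refine congrArg (a * ·) (Finsupp.sum_congr fun m _ => ?_)
  rw [add_assoc]

/-- The annihilator of a single trajectory, as a module over `ℝ[z,z⁻¹]`. -/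
noncomputable def annih {n : ℕ} (w : ℤ → Fin n → ℝ) :
    Submodule (LaurentPolynomial ℝ) (Fin n → LaurentPolynomial ℝ) where
  carrier := {r | ∀ t, rowOp r w t = 0}
  zero_mem' := fun t => rowOp_zero w t
  add_mem' := by
    intro r s hr hs t
    rw [rowOp_add, hr, hs, add_zero]
  smul_mem' := by
    intro p r hr
    induction p using LaurentPolynomial.induction_on' with
    | add p q hp hq =>
      intro t
      rw [add_smul, rowOp_add, hp, hq, add_zero]
    | C_mul_T k a =>
      intro t
      rw [rowOp_monomial_smul, hr, mul_zero]

lemma mem_annih {n : ℕ} {w : ℤ → Fin n → ℝ} {r : Fin n → LaurentPolynomial ℝ} :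
    r ∈ annih w ↔ ∀ t, rowOp r w t = 0 := Iff.rfl

lemma rowOp_finset_sum {n : ℕ} {α : Type*} (S : Finset α)
    (g : α → Fin n → LaurentPolynomial ℝ) (w : ℤ → Fin n → ℝ) (t : ℤ) :
    rowOp (∑ s ∈ S, g s) w t = ∑ s ∈ S, rowOp (g s) w t := by
  induction S using Finset.cons_induction with
  | empty => simp [rowOp_zero]
  | cons a S ha ih => rw [Finset.sum_cons, Finset.sum_cons, rowOp_add, ih]

lemma rowOp_single {n : ℕ} (s : ℤ) (c : Fin n → ℝ) (w : ℤ → Fin n → ℝ) (t : ℤ) :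
    rowOp (fun j => (AddMonoidAlgebra.single s (c j) : LaurentPolynomial ℝ)) w t
      = ∑ j, c j * w (t + s) j := by
  unfold rowOp
  exact Finset.sum_congr rfl fun j _ => Finsupp.sum_single_index (zero_mul _)

instance : IsNoetherianRing (LaurentPolynomial ℝ) := by
  haveI := LaurentPolynomial.isLocalization (R := ℝ)
  exact IsLocalization.isNoetherianRing (Submonoid.powers (Polynomial.X : Polynomial ℝ))
    (LaurentPolynomial ℝ) inferInstance

/-- Every linear, time-invariant, complete behavior admits a kernel
representation: if `B ⊆ (ℝⁿ)^ℤ` is an ℝ-linear subspace satisfying `σB = B` (where `σ` is the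
backward shift) and `B` is complete (i.e. `w ∈ B` whenever for all integers `t₁ ≤ t₂` there
exists `v ∈ B` with `v(t) = w(t)` for all `t ∈ [t₁,t₂]`), then there exist `p ∈ ℕ` and a
Laurent polynomial matrix `R(z) ∈ ℝ[z,z⁻¹]^{p×n}` such that `B = ker∞R`. -/
theorem complete_LTI_behavior_has_kernel_representation (n : ℕ)
    (B : Submodule ℝ (ℤ → Fin n → ℝ))
    (hshift : (fun w : ℤ → Fin n → ℝ => fun t => w (t + 1)) '' (B : Set (ℤ → Fin n → ℝ))
      = (B : Set (ℤ → Fin n → ℝ)))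
    (hcomplete : ∀ w : ℤ → Fin n → ℝ,
      (∀ t₁ t₂ : ℤ, t₁ ≤ t₂ → ∃ v ∈ B, ∀ t : ℤ, t₁ ≤ t → t ≤ t₂ → v t = w t) → w ∈ B) :
    ∃ (p : ℕ) (R : Matrix (Fin p) (Fin n) (LaurentPolynomial ℝ)),
      (B : Set (ℤ → Fin n → ℝ)) = {w : ℤ → Fin n → ℝ | shiftOp R w = 0} := by
  classical
  -- shift invariance in both directions
  have hsh1 : ∀ v ∈ B, (fun u => v (u + 1)) ∈ B := by
    intro v hv
    have h : (fun u => v (u + 1)) ∈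
        ((fun w : ℤ → Fin n → ℝ => fun t => w (t + 1)) '' (B : Set (ℤ → Fin n → ℝ))) :=
      ⟨v, hv, rfl⟩
    rw [hshift] at h
    exact h
  have hsh2 : ∀ v ∈ B, (fun u => v (u - 1)) ∈ B := by
    intro v hv
    have hv' : v ∈ ((fun w : ℤ → Fin n → ℝ => fun t => w (t + 1)) ''
        (B : Set (ℤ → Fin n → ℝ))) := by rw [hshift]; exact hv
    obtain ⟨u, hu, huv⟩ := hv'
    have he : (fun s => v (s - 1)) = u := by
      funext s
      rw [← congrFun huv (s - 1)]
      show u (s - 1 + 1) = u s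
      congr 1
      ring
    rw [he]
    exact hu
  have hshall : ∀ v ∈ B, ∀ τ : ℤ, (fun u => v (u + τ)) ∈ B := by
    intro v hv τ
    induction τ using Int.induction_on with
    | zero => simpa using hv
    | succ k ih =>
      have h := hsh1 _ ih
      have he : (fun u => (fun s => v (s + (k : ℤ))) (u + 1))
          = fun u => v (u + ((k : ℤ) + 1)) := by
        funext u; congr 1; ring
      rw [he] at h
      exact h
    | pred k ih =>
      have h := hsh2 _ ih
      have he : (fun u => (fun s => v (s + (-(k : ℤ)))) (u - 1))
          = fun u => v (u + (-(k : ℤ) - 1)) := by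
        funext u; congr 1; ring
      rw [he] at h
      exact h
  -- the annihilator module of B
  set N : Submodule (LaurentPolynomial ℝ) (Fin n → LaurentPolynomial ℝ) :=
    ⨅ v : B, annih (v : ℤ → Fin n → ℝ) with hN
  have memN : ∀ r : Fin n → LaurentPolynomial ℝ,
      r ∈ N ↔ ∀ v ∈ B, ∀ t, rowOp r v t = 0 := by
    intro r
    rw [hN, Submodule.mem_iInf]
    constructor
    · intro h v hv t
      exact h ⟨v, hv⟩ t
    · intro h v t
      exact h v v.2 t
  obtain ⟨S, hS⟩ := IsNoetherian.noetherian N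
  set p := S.card with hp
  set gens : Fin p → (Fin n → LaurentPolynomial ℝ) :=
    fun i => ((S.equivFin.symm i : S) : Fin n → LaurentPolynomial ℝ) with hgensdef
  have hgens : ∀ i, gens i ∈ N := by
    intro i
    rw [← hS]
    exact Submodule.subset_span (S.equivFin.symm i).2
  refine ⟨p, fun i j => gens i j, ?_⟩
  have hker : ∀ w : ℤ → Fin n → ℝ,
      shiftOp (fun i j => gens i j) w = 0 ↔ ∀ i t, rowOp (gens i) w t = 0 := by
    intro w
    constructor
    · intro h i t
      exact congrFun (congrFun h t) i
    · intro h
      funext t i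
      exact h i t
  ext w
  simp only [Set.mem_setOf_eq, SetLike.mem_coe]
  constructor
  · intro hw
    rw [hker]
    intro i t
    exact (memN _).mp (hgens i) w hw t
  · intro hw
    have hrows : ∀ i t, rowOp (gens i) w t = 0 := (hker w).mp hw
    have hle : N ≤ annih w := by
      rw [← hS]
      refine Submodule.span_le.mpr ?_
      intro x hx
      have hx' : ∃ i, gens i = x := ⟨S.equivFin ⟨x, hx⟩, by simp [hgensdef]⟩
      obtain ⟨i, rfl⟩ := hx'
      intro t
      exact hrows i t
    apply hcomplete
    intro t₁ t₂ ht
    set π : (ℤ → Fin n → ℝ) →ₗ[ℝ] ((↥(Finset.Icc t₁ t₂) × Fin n) → ℝ) :=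
      { toFun := fun v i => v (i.1 : ℤ) i.2
        map_add' := fun a b => rfl
        map_smul' := fun c a => rfl } with hπ
    by_cases hmem : π w ∈ B.map π
    · obtain ⟨v, hv, hπv⟩ := hmem
      refine ⟨v, hv, fun t h1 h2 => ?_⟩
      funext j
      exact congrFun hπv (⟨t, Finset.mem_Icc.mpr ⟨h1, h2⟩⟩, j)
    · exfalso
      obtain ⟨f, hf0, hfbot⟩ :=
        Submodule.exists_dual_map_eq_bot_of_notMem hmem inferInstance
      have hfzero : ∀ u ∈ B.map π, f u = 0 := by
        intro u hu
        exact (LinearMap.le_ker_iff_map.mpr hfbot) hu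
      set c : ↥(Finset.Icc t₁ t₂) → Fin n → ℝ :=
        fun s j => f (fun i => if (s, j) = i then 1 else 0) with hc
      set r : Fin n → LaurentPolynomial ℝ :=
        fun j => ∑ s : ↥(Finset.Icc t₁ t₂),
          (AddMonoidAlgebra.single (s : ℤ) (c s j) : LaurentPolynomial ℝ) with hrdef
      have hr : ∀ (v : ℤ → Fin n → ℝ) (t : ℤ),
          rowOp r v t = f (π (fun u => v (u + t))) := by
        intro v t
        have hsplit : r = ∑ s : ↥(Finset.Icc t₁ t₂),
            (fun j => (AddMonoidAlgebra.single (s : ℤ) (c s j) : LaurentPolynomial ℝ)) := by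
          funext j
          rw [Finset.sum_apply]
        have hL : rowOp r v t
            = ∑ s : ↥(Finset.Icc t₁ t₂), ∑ j, c s j * v (t + (s : ℤ)) j := by
          rw [hsplit, rowOp_finset_sum]
          exact Finset.sum_congr rfl fun s _ => rowOp_single _ _ _ _
        rw [hL, LinearMap.pi_apply_eq_sum_univ f (π fun u => v (u + t)),
          Fintype.sum_prod_type]
        refine Finset.sum_congr rfl fun s _ => Finset.sum_congr rfl fun j _ => ?_
        show c s j * v (t + (s : ℤ)) j = v ((s : ℤ) + t) j • c s j
        rw [smul_eq_mul, mul_comm]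
        congr 2
        ring
      have hrN : r ∈ N := by
        rw [memN]
        intro v hv t
        rw [hr]
        exact hfzero _ (Submodule.mem_map_of_mem (hshall v hv t))
      have h0 : rowOp r w 0 = 0 := hle hrN 0
      rw [hr] at h0
      have hw0 : (fun u => w (u + (0 : ℤ))) = w := by
        funext u; simp
      rw [hw0] at h0
      exact hf0 h0
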